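/- arXiv:1702.06266 — 2 statements merged into one kernel-verified Lean document; each statement's English description precedes it below -/
import Mathlib

section
/- Let S be a semilattice and let E ⊆ S be a finite nonempty subset with |E| = n. Then the subsemilattice of S generated by E, namely { ∏_{x∈F} x : F a nonempty subset of E }, has cardinality at most 2^n − 1, and equality holds if and only if E is incompressible. -/
open Set Filter
open scoped Classical

variable {Ω : Type*}

/-- A union-closed set system (concrete semilattice) on `Ω`. -/
def UnionClosed (S : Set (Set Ω)) : Prop := ∀ x ∈ S, ∀ y ∈ S, x ∪ y ∈ S

/-- A finite collection of subsets of `Ω` is incompressible if no proper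
subcollection has the same union. -/
def Incompressible (F : Finset (Set Ω)) : Prop :=
  ∀ F' ⊂ F, ⋃₀ (↑F' : Set (Set Ω)) ≠ ⋃₀ (↑F : Set (Set Ω))

/-- `S` has infinite breadth: incompressible subcollections of every size. -/
def InfiniteBreadth (S : Set (Set Ω)) : Prop :=
  ∀ n : ℕ, ∃ F : Finset (Set Ω), ↑F ⊆ S ∧ F.card = n ∧ Incompressible F

/-- `S` has finite breadth. -/
def FiniteBreadth (S : Set (Set Ω)) : Prop :=
  ∃ N : ℕ, ∀ F : Finset (Set Ω), ↑F ⊆ S → Incompressible F → F.card ≤ N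

/-- `S` has breadth at most `m`. -/
def BreadthLE (S : Set (Set Ω)) (m : ℕ) : Prop :=
  ∀ F : Finset (Set Ω), ↑F ⊆ S → Incompressible F → F.card ≤ m

/-- `S ⊓ a = { x ∩ a : x ∈ S }`. -/
def proj (S : Set (Set Ω)) (a : Set Ω) : Set (Set Ω) := (fun x => x ∩ a) '' S

/-- `S ⊖ a = { x \ a : x ∈ S }`. -/
def ominus (S : Set (Set Ω)) (a : Set Ω) : Set (Set Ω) := (fun x => x \ a) '' S

/-- `S^{−Γ} = { x ∈ S : x ∩ Γ = ∅ }`. -/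
def avoid (S : Set (Set Ω)) (Γ : Set Ω) : Set (Set Ω) := {x ∈ S | x ∩ Γ = ∅}

/-- A spread: pairwise disjoint nonempty finite sets with sizes tending to infinity. -/
def IsSpread (E : ℕ → Set Ω) : Prop :=
  (∀ n, (E n).Finite) ∧ (∀ n, (E n).Nonempty) ∧
  (∀ m n, m ≠ n → Disjoint (E m) (E n)) ∧
  Tendsto (fun n => (E n).ncard) atTop atTop

/-- The join of a spread. -/
def sjoin (E : ℕ → Set Ω) : Set Ω := ⋃ n, E n

/-- The set system `T_max(ℰ)`. -/
def Tmax (E : ℕ → Set Ω) : Set (Set Ω) :=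
  {x | ∃ n, ∃ a : Set Ω, a ⊆ E n ∧ a.Nonempty ∧ x = (⋃ k < n, E k) ∪ a}

/-- The set system `T_min(ℰ)`. -/
def Tmin (E : ℕ → Set Ω) : Set (Set Ω) :=
  {x | ∃ n, ∃ a : Set Ω, a ⊆ E n ∧ a.Nonempty ∧ x = a ∪ ⋃ k > n, E k}

/-- The set system `T_ort(ℰ)`. -/
def Tort (E : ℕ → Set Ω) : Set (Set Ω) :=
  {x | ∃ n, ∃ a : Set Ω, a ⊆ E n ∧ a.Nonempty ∧
        x = (⋃ k < n, E k) ∪ a ∪ ⋃ k > n, E k}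

/-- A refinement of a spread. -/
def Refines (F E : ℕ → Set Ω) : Prop :=
  IsSpread F ∧ ∃ g : ℕ → ℕ, Function.Injective g ∧ ∀ j, F j ⊆ E (g j)

/-- The sequence `a` shatters the spread `E`. -/
def Shatters (a : ℕ → Set Ω) (E : ℕ → Set Ω) : Prop :=
  ∀ (m : ℕ) (y : ℕ → Set Ω), (∀ j < m, y j = a j ∨ y j = (a j)ᶜ) →
    Tendsto (fun n => (E n ∩ ⋂ j < m, y j).ncard) atTop atTop

/-- A finite partition of `Ω`. -/
def IsPartitionC (C : Finset (Set Ω)) : Prop :=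
  (∀ c ∈ C, ∀ d ∈ C, c ≠ d → Disjoint c d) ∧ ⋃₀ (↑C : Set (Set Ω)) = univ

/-- `C` colours the spread `E`. -/
def Colours (C : Finset (Set Ω)) (E : ℕ → Set Ω) : Prop :=
  ∀ c ∈ C, Tendsto (fun n => (c ∩ E n).ncard) atTop atTop

/-- The colouring `C` of the spread `E` is `S`-decisive. -/
def Decisive (S : Set (Set Ω)) (C : Finset (Set Ω)) (E : ℕ → Set Ω) : Prop :=
  ∃ c₀ ∈ C, ∀ x ∈ S, ∃ B : ℕ, ∀ n,
    (x ∩ c₀ ∩ E n).ncard ≤ B ∨ ∃ c ∈ C, (xᶜ ∩ c ∩ E n).ncard ≤ B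

/-- `F` halves `D` with respect to `(E n)_{n ∈ N}`. -/
def Halves (F D : Set Ω) (E : ℕ → Set Ω) (N : Set ℕ) : Prop :=
  Tendsto (fun n => (D ∩ F ∩ E n).ncard) (atTop ⊓ 𝓟 N) atTop ∧
  Tendsto (fun n => ((D \ F) ∩ E n).ncard) (atTop ⊓ 𝓟 N) atTop

/-- `Ew` is a witness of incompressibility for the collection `F`. -/
def IsWitness (F : Finset (Set Ω)) (Ew : Set Ω) : Prop :=
  ∃ w : Set Ω → Ω, (∀ x ∈ F, w x ∈ x ∧ ∀ y ∈ F, y ≠ x → w x ∉ y) ∧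
    Ew = w '' (↑F : Set (Set Ω))

/-- Condition (A). -/
def CondA (S : Set (Set Ω)) : Prop :=
  ∀ k : ℕ, ∀ p ∈ insert (∅ : Set Ω) S, InfiniteBreadth (proj S pᶜ) →
    ∃ F : Finset (Set Ω), ↑F ⊆ ominus S p ∧ F.card = k ∧ Incompressible F ∧
      InfiniteBreadth (proj (ominus S p) (⋃₀ (↑F : Set (Set Ω)))ᶜ)

/-- Condition (B). -/
def CondB (S : Set (Set Ω)) : Prop :=
  ∀ k : ℕ, ∀ c Γ : Set Ω, InfiniteBreadth (proj (avoid S Γ) c) →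
    ∃ F : Finset (Set Ω), ↑F ⊆ proj (avoid S Γ) c ∧ F.card = k ∧ Incompressible F ∧
      ∃ Ew : Set Ω, IsWitness F Ew ∧ InfiniteBreadth (proj (avoid S (Γ ∪ Ew)) c)

/-- Incompressibility in an abstract (sup-)semilattice: the product (sup) over any proper
nonempty subset differs from the product over the whole set. -/
def AIncomp {S : Type*} [SemilatticeSup S] (E : Finset S) : Prop :=
  ∀ E' ⊂ E, ∀ (h' : E'.Nonempty) (h : E.Nonempty), E'.sup' h' id ≠ E.sup' h id

/-- Incompressibility in an abstract meet-semilattice. -/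
def AIncompInf {S : Type*} [SemilatticeInf S] (E : Finset S) : Prop :=
  ∀ E' ⊂ E, ∀ (h' : E'.Nonempty) (h : E.Nonempty), E'.inf' h' id ≠ E.inf' h id

/-- The standard spread on ℕ × ℕ: `E0 n = {(n,k) : k ≤ n}` (0-based, |E0 n| = n+1). -/
def E0 : ℕ → Set (ℕ × ℕ) := fun n => {p | p.1 = n ∧ p.2 ≤ n}


/-- The subsemilattice generated by an `n`-element set has at most `2^n − 1` elements,
with equality iff the set is incompressible. -/
theorem stmt15 {S : Type*} [SemilatticeSup S] (n : ℕ) (E : Finset S)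
    (hE : E.Nonempty) (hcard : E.card = n) :
    ({s : S | ∃ F : Finset S, F ⊆ E ∧ ∃ hF : F.Nonempty, F.sup' hF id = s}.ncard
        ≤ 2 ^ n - 1) ∧
    ({s : S | ∃ F : Finset S, F ⊆ E ∧ ∃ hF : F.Nonempty, F.sup' hF id = s}.ncard
        = 2 ^ n - 1 ↔ AIncomp E) := by
  classical
  obtain ⟨x₀, hx₀⟩ := hE
  set f : Finset S → S := fun F => if h : F.Nonempty then F.sup' h id else x₀ with hf
  set P : Finset (Finset S) := E.powerset.filter (·.Nonempty) with hP
  have hPcard : P.card = 2 ^ n - 1 := by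
    have hPe : P = E.powerset.erase ∅ := by
      ext F
      simp [hP, Finset.mem_erase, Finset.nonempty_iff_ne_empty, and_comm]
    rw [hPe, Finset.card_erase_of_mem (by simp), Finset.card_powerset, hcard]
  have hset : {s : S | ∃ F : Finset S, F ⊆ E ∧ ∃ hF : F.Nonempty, F.sup' hF id = s}
      = ↑(P.image f) := by
    ext s
    simp only [Finset.coe_image, Set.mem_image, Finset.mem_coe, hP, Finset.mem_filter,
      Finset.mem_powerset, Set.mem_setOf_eq]
    constructor
    · rintro ⟨F, hFE, hFne, rfl⟩
      exact ⟨F, ⟨hFE, hFne⟩, by simp [hf, hFne]⟩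
    · rintro ⟨F, ⟨hFE, hFne⟩, rfl⟩
      exact ⟨F, hFE, hFne, by simp [hf, hFne]⟩
  rw [hset, Set.ncard_coe_finset]
  have hle : (P.image f).card ≤ 2 ^ n - 1 := hPcard ▸ Finset.card_image_le
  refine ⟨hle, ?_⟩
  rw [← hPcard, Finset.card_image_iff]
  constructor
  · intro hinj E' hsub h' h heq
    have hE'P : E' ∈ P := by
      simp [hP, Finset.mem_filter, Finset.mem_powerset, hsub.subset, h']
    have hEP : E ∈ P := by simp [hP, h]
    have : E' = E := hinj (Finset.mem_coe.mpr hE'P) (Finset.mem_coe.mpr hEP)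
      (by simp only [hf]; rw [dif_pos h', dif_pos h]; exact heq)
    exact hsub.ne this
  · intro hinc
    have key : ∀ (F G : Finset S), F ⊆ E → G ⊆ E → ∀ (hFne : F.Nonempty) (hGne : G.Nonempty),
        F.sup' hFne id = G.sup' hGne id → ∀ x ∈ G, x ∉ F → False := by
      intro F G hFE hGE hFne hGne hfg x hxG hxF
      have hxE : x ∈ E := hGE hxG
      have hFsub : F ⊆ E.erase x := fun y hy =>
        Finset.mem_erase.mpr ⟨fun h => hxF (h ▸ hy), hFE hy⟩
      have hEne' : (E.erase x).Nonempty := hFne.mono hFsub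
      have hEE : E.erase x ⊂ E := Finset.erase_ssubset hxE
      apply hinc (E.erase x) hEE hEne' ⟨x₀, hx₀⟩
      apply le_antisymm (Finset.sup'_mono id (Finset.erase_subset x E) hEne')
      apply Finset.sup'_le
      intro y hyE
      by_cases hyx : y ∈ E.erase x
      · exact Finset.le_sup' id hyx
      · have hyeq : y = x := by
          by_contra hne
          exact hyx (Finset.mem_erase.mpr ⟨hne, hyE⟩)
        subst hyeq
        calc (id y : S) ≤ G.sup' hGne id := Finset.le_sup' id hxG
          _ = F.sup' hFne id := hfg.symm
          _ ≤ (E.erase y).sup' hEne' id := Finset.sup'_mono id hFsub hFne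
    intro F hF G hG hfg
    rw [Finset.mem_coe, hP, Finset.mem_filter, Finset.mem_powerset] at hF hG
    obtain ⟨hFE, hFne⟩ := hF
    obtain ⟨hGE, hGne⟩ := hG
    simp only [hf, dif_pos hFne, dif_pos hGne] at hfg
    by_contra hne
    have hcases : ¬F ⊆ G ∨ ¬G ⊆ F := by
      by_contra h
      push_neg at h
      exact hne (Finset.Subset.antisymm h.1 h.2)
    rcases hcases with h | h
    · obtain ⟨x, hxF, hxG⟩ := Finset.not_subset.mp h
      exact key G F hGE hFE hGne hFne hfg.symm x hxF hxG
    · obtain ⟨x, hxG, hxF⟩ := Finset.not_subset.mp h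
      exact key F G hFE hGE hFne hGne hfg x hxG hxF
end

section
/- Let ℰ = (E_n)_{n≥1} be a spread in a set Ω, and let T be one of the set systems T_max(ℰ), T_min(ℰ), T_ort(ℰ). If F ⊆ T is an incompressible family with |F| ≥ 3, then all members of F have the same level; that is, there exists n such that every member of F arises from index n in the definition of T. -/
open Set Filter
open scoped Classical

variable {Ω : Type*}

lemma compress_aux {Ω : Type*} {F : Finset (Set Ω)} {z : Set Ω} (hz : z ∈ F)
    (h : z ⊆ ⋃₀ ↑(F.erase z)) : ¬ Incompressible F := by
  intro hI
  apply hI (F.erase z) (Finset.erase_ssubset hz)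
  apply subset_antisymm
  · exact Set.sUnion_subset_sUnion (Finset.coe_subset.mpr (Finset.erase_subset _ _))
  · rintro t ⟨s, hs, hts⟩
    by_cases hsz : s = z
    · exact h (hsz ▸ hts)
    · exact ⟨s, Finset.mem_coe.mpr (Finset.mem_erase.mpr ⟨hsz, Finset.mem_coe.mp hs⟩), hts⟩

/-- In each of `T_max(ℰ)`, `T_min(ℰ)`, `T_ort(ℰ)`, any incompressible family with at
least 3 members lies in a single level. -/
theorem stmt19 {Ω : Type*} (E : ℕ → Set Ω) (hE : IsSpread E) :
    (∀ F : Finset (Set Ω), ↑F ⊆ Tmax E → Incompressible F → 3 ≤ F.card →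
      ∃ n, ∀ x ∈ F, ∃ a : Set Ω, a ⊆ E n ∧ a.Nonempty ∧
        x = (⋃ k < n, E k) ∪ a) ∧
    (∀ F : Finset (Set Ω), ↑F ⊆ Tmin E → Incompressible F → 3 ≤ F.card →
      ∃ n, ∀ x ∈ F, ∃ a : Set Ω, a ⊆ E n ∧ a.Nonempty ∧
        x = a ∪ ⋃ k > n, E k) ∧
    (∀ F : Finset (Set Ω), ↑F ⊆ Tort E → Incompressible F → 3 ≤ F.card →
      ∃ n, ∀ x ∈ F, ∃ a : Set Ω, a ⊆ E n ∧ a.Nonempty ∧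
        x = (⋃ k < n, E k) ∪ a ∪ ⋃ k > n, E k) := by
  refine ⟨?_, ?_, ?_⟩
  -- Tmax
  · intro F hF hInc hcard
    have hFne : F.Nonempty := Finset.card_pos.mp (by omega)
    have h : ∀ x ∈ F, ∃ n, ∃ a : Set Ω, a ⊆ E n ∧ a.Nonempty ∧
        x = (⋃ k < n, E k) ∪ a := fun x hx => hF hx
    choose! ℓ a ha hane hrep using h
    obtain ⟨y, hy, hℓy⟩ := Finset.mem_image.mp ((F.image ℓ).max'_mem (hFne.image ℓ))
    refine ⟨(F.image ℓ).max' (hFne.image ℓ), fun x hx => ?_⟩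
    have hle : ℓ x ≤ (F.image ℓ).max' (hFne.image ℓ) :=
      Finset.le_max' _ _ (Finset.mem_image_of_mem ℓ hx)
    rcases hle.lt_or_eq with hlt | heq
    · exfalso
      rw [← hℓy] at hlt
      have hxy : x ≠ y := fun h => by rw [h] at hlt; exact lt_irrefl _ hlt
      have hsub : x ⊆ y := by
        rw [hrep x hx, hrep y hy]
        intro t ht
        refine Set.mem_union_left _ ?_
        rcases (Set.mem_union _ _ _).mp ht with ht | ht
        · obtain ⟨k, hk, htk⟩ := Set.mem_iUnion₂.mp ht
          exact Set.mem_iUnion₂.mpr ⟨k, hk.trans hlt, htk⟩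
        · exact Set.mem_iUnion₂.mpr ⟨ℓ x, hlt, ha x hx ht⟩
      refine compress_aux hx (hsub.trans (Set.subset_sUnion_of_mem ?_)) hInc
      simp only [Finset.coe_erase, Set.mem_diff, Set.mem_singleton_iff]
      exact ⟨hy, fun h => hxy h.symm⟩
    · exact ⟨a x, heq ▸ ha x hx, hane x hx, heq ▸ hrep x hx⟩
  -- Tmin
  · intro F hF hInc hcard
    have hFne : F.Nonempty := Finset.card_pos.mp (by omega)
    have h : ∀ x ∈ F, ∃ n, ∃ a : Set Ω, a ⊆ E n ∧ a.Nonempty ∧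
        x = a ∪ ⋃ k > n, E k := fun x hx => hF hx
    choose! ℓ a ha hane hrep using h
    obtain ⟨y, hy, hℓy⟩ := Finset.mem_image.mp ((F.image ℓ).min'_mem (hFne.image ℓ))
    refine ⟨(F.image ℓ).min' (hFne.image ℓ), fun x hx => ?_⟩
    have hle : (F.image ℓ).min' (hFne.image ℓ) ≤ ℓ x :=
      Finset.min'_le _ _ (Finset.mem_image_of_mem ℓ hx)
    rcases hle.lt_or_eq with hlt | heq
    · exfalso
      rw [← hℓy] at hlt
      have hxy : x ≠ y := fun h => by rw [h] at hlt; exact lt_irrefl _ hlt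
      have hsub : x ⊆ y := by
        rw [hrep x hx, hrep y hy]
        intro t ht
        refine Set.mem_union_right _ ?_
        rcases (Set.mem_union _ _ _).mp ht with ht | ht
        · exact Set.mem_iUnion₂.mpr ⟨ℓ x, hlt, ha x hx ht⟩
        · obtain ⟨k, hk, htk⟩ := Set.mem_iUnion₂.mp ht
          exact Set.mem_iUnion₂.mpr ⟨k, hlt.trans hk, htk⟩
      refine compress_aux hx (hsub.trans (Set.subset_sUnion_of_mem ?_)) hInc
      simp only [Finset.coe_erase, Set.mem_diff, Set.mem_singleton_iff]
      exact ⟨hy, fun h => hxy h.symm⟩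
    · exact ⟨a x, heq ▸ ha x hx, hane x hx, heq ▸ hrep x hx⟩
  -- Tort
  · intro F hF hInc hcard
    have hFne : F.Nonempty := Finset.card_pos.mp (by omega)
    have h : ∀ x ∈ F, ∃ n, ∃ a : Set Ω, a ⊆ E n ∧ a.Nonempty ∧
        x = (⋃ k < n, E k) ∪ a ∪ ⋃ k > n, E k := fun x hx => hF hx
    choose! ℓ a ha hane hrep using h
    obtain ⟨y, hy, hℓy⟩ := Finset.mem_image.mp ((F.image ℓ).max'_mem (hFne.image ℓ))
    refine ⟨(F.image ℓ).max' (hFne.image ℓ), fun x hx => ?_⟩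
    have hle : ℓ x ≤ (F.image ℓ).max' (hFne.image ℓ) :=
      Finset.le_max' _ _ (Finset.mem_image_of_mem ℓ hx)
    rcases hle.lt_or_eq with hlt | heq
    · exfalso
      rw [← hℓy] at hlt
      have hxy : x ≠ y := fun h => by rw [h] at hlt; exact lt_irrefl _ hlt
      -- find a third element z
      have hc1 : F.card - 1 ≤ (F.erase x).card := Finset.pred_card_le_card_erase
      have hc2 : (F.erase x).card - 1 ≤ ((F.erase x).erase y).card :=
        Finset.pred_card_le_card_erase
      have hzne : ((F.erase x).erase y).Nonempty := Finset.card_pos.mp (by omega)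
      obtain ⟨z, hzmem⟩ := hzne
      simp only [Finset.mem_erase] at hzmem
      obtain ⟨hzy, hzx, hzF⟩ := hzmem
      -- the union of x and y covers everything
      have hjoin : (⋃ k, E k) ⊆ x ∪ y := by
        rw [hrep x hx, hrep y hy]
        intro t ht
        obtain ⟨k, htk⟩ := Set.mem_iUnion.mp ht
        rcases lt_trichotomy k (ℓ x) with hk | hk | hk
        · exact Or.inl (Or.inl (Or.inl (Set.mem_iUnion₂.mpr ⟨k, hk, htk⟩)))
        · refine Or.inr (Or.inl (Or.inl (Set.mem_iUnion₂.mpr ⟨k, ?_, htk⟩)))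
          rw [hk]; exact hlt
        · exact Or.inl (Or.inr (Set.mem_iUnion₂.mpr ⟨k, hk, htk⟩))
      have hzsub : z ⊆ ⋃ k, E k := by
        rw [hrep z hzF]
        refine Set.union_subset (Set.union_subset ?_ ?_) ?_
        · exact Set.iUnion₂_subset fun k _ => Set.subset_iUnion E k
        · exact (ha z hzF).trans (Set.subset_iUnion E (ℓ z))
        · exact Set.iUnion₂_subset fun k _ => Set.subset_iUnion E k
      refine compress_aux hzF (fun t htz => ?_) hInc
      rcases (Set.mem_union _ _ _).mp (hjoin (hzsub htz)) with ht | ht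
      · exact ⟨x, Finset.mem_coe.mpr (Finset.mem_erase.mpr ⟨fun h => hzx h.symm, hx⟩), ht⟩
      · exact ⟨y, Finset.mem_coe.mpr (Finset.mem_erase.mpr ⟨fun h => hzy h.symm, hy⟩), ht⟩
    · exact ⟨a x, heq ▸ ha x hx, hane x hx, heq ▸ hrep x hx⟩
end
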